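/- Let V be a type, G a simple graph on V, Λ a type, and A : V → (V → Λ) → Prop a predicate that is 1-local with respect to G. Suppose l assigns to each vertex v a labeling l_v : V → Λ such that: (1) A v l_v holds for every vertex v, and (2) for all adjacent vertices u and v, l_u(u) = l_v(u) and l_u(v) = l_v(v). Then the global labeling L defined by L(w) = l_w(w) satisfies A v L for every vertex v. -/

import Mathlib

/-- `A` is 1-local with respect to `G`: the verdict of `A` at `v` depends only on
the labels of `v` and its neighbors. -/
def OneLocal {V Λ : Type*} (G : SimpleGraph V) (A : V → (V → Λ) → Prop) : Prop :=
  ∀ (v : V) (L L' : V → Λ), L v = L' v → (∀ u, G.Adj v u → L u = L' u) →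
    (A v L ↔ A v L')

/-- Soundness core of the refix framework (base view distance 1): if every node
accepts its imagined labeling and adjacent nodes' imagined labelings agree on each
other, then the assembled labeling `L w = l w w` is accepted everywhere. -/
theorem refix_soundness_assembly
    {V Λ : Type*} (G : SimpleGraph V)
    (A : V → (V → Λ) → Prop) (hA : OneLocal G A)
    (l : V → V → Λ)
    (h1 : ∀ v : V, A v (l v))
    (h2 : ∀ u v : V, G.Adj u v → l u u = l v u ∧ l u v = l v v) :
    ∀ v : V, A v (fun w => l w w) := by
  intro v
  exact (hA v (l v) (fun w => l w w) rfl (fun u hu => ((h2 u v (G.adj_symm hu)).1).symm)).mp (h1 v)
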